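/- arXiv:1501.05563 — 5 statements merged into one kernel-verified Lean document; each statement's English description precedes it below -/
import Mathlib

section
/- (Theorem 1) Let λ > 0, ν > 0, G > 0, and let μ_B and μ_S be probability measures on [0,∞) with finite means b₁ and s₁, and suppose ρ := λ b₁ < 1. Define β(z) = ∫₀^∞ e^{−λ(1−z)t} dμ_B(t), σ(z) = ∫₀^∞ e^{−λ(1−z)t} dμ_S(t), f(z) = (1 − e^{−νG}) β(z) + e^{−νG} z, and K(z) = σ(z) e^{−λ(1−β(z))G}. Suppose X : [0,1] → ℝ is continuous at 1, satisfies X(1) = 1, and satisfies the functional equation X(z) = K(z) X(f(z)) for all z ∈ [0,1]. Then for every z ∈ [0,1] the infinite product ∏_{j=0}^∞ K(f⁽ʲ⁾(z)) converges and X(z) = ∏_{j=0}^∞ K(f⁽ʲ⁾(z)), where f⁽⁰⁾(z) = z and f⁽ʲ⁾(z) = f(f⁽ʲ⁻¹⁾(z)). -/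
open MeasureTheory Filter Set Topology

private lemma aux_exp_integrable (lam w : ℝ) (hlam : 0 < lam) (hw : w ∈ Icc (0:ℝ) 1)
    (μ : Measure ℝ) [IsProbabilityMeasure μ] (hsupp : ∀ᵐ t ∂μ, 0 ≤ t) :
    Integrable (fun t => Real.exp (-lam * (1 - w) * t)) μ := by
  apply Integrable.mono' (integrable_const (1:ℝ))
  · exact (Real.continuous_exp.comp (by continuity)).aestronglyMeasurable
  · filter_upwards [hsupp] with t ht
    rw [Real.norm_eq_abs, abs_of_pos (Real.exp_pos _)]
    rw [Real.exp_le_one_iff]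
    have h0 : 0 ≤ lam * (1 - w) * t :=
      mul_nonneg (mul_nonneg hlam.le (by linarith [hw.2])) ht
    linarith

private lemma aux_exp_le_one (lam w : ℝ) (hlam : 0 < lam) (hw : w ∈ Icc (0:ℝ) 1)
    (μ : Measure ℝ) [IsProbabilityMeasure μ] (hsupp : ∀ᵐ t ∂μ, 0 ≤ t) :
    (∫ t, Real.exp (-lam * (1 - w) * t) ∂μ) ≤ 1 := by
  have h := integral_mono_ae (aux_exp_integrable lam w hlam hw μ hsupp)
    (integrable_const (1:ℝ)) ?_
  · simpa using h
  · filter_upwards [hsupp] with t ht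
    rw [Real.exp_le_one_iff]
    have h0 : 0 ≤ lam * (1 - w) * t :=
      mul_nonneg (mul_nonneg hlam.le (by linarith [hw.2])) ht
    linarith

private lemma aux_exp_nonneg (lam w : ℝ) (μ : Measure ℝ) :
    (0:ℝ) ≤ ∫ t, Real.exp (-lam * (1 - w) * t) ∂μ :=
  integral_nonneg fun t => (Real.exp_pos _).le

/-- Theorem 1: If `ρ = λ b₁ < 1`, the generating function `X` of
the stationary number of customers in orbit at the beginning of a glue period,
which satisfies `X z = K z · X (f z)`, is given by the infinite product
`X z = ∏_{j=0}^∞ K (f⁽ʲ⁾ z)`. -/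
theorem stationary_gf_infinite_product
    (lam ν G : ℝ) (hlam : 0 < lam) (hν : 0 < ν) (hG : 0 < G)
    (μB μS : Measure ℝ) [IsProbabilityMeasure μB] [IsProbabilityMeasure μS]
    (hsuppB : ∀ᵐ t ∂μB, 0 ≤ t) (hsuppS : ∀ᵐ t ∂μS, 0 ≤ t)
    (hintB : Integrable (fun t : ℝ => t) μB)
    (hintS : Integrable (fun t : ℝ => t) μS)
    (b₁ s₁ : ℝ) (hb₁ : b₁ = ∫ t, t ∂μB) (hs₁ : s₁ = ∫ t, t ∂μS)
    (hρ : lam * b₁ < 1)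
    (β σ f K : ℝ → ℝ)
    (hβ : ∀ z : ℝ, β z = ∫ t, Real.exp (-lam * (1 - z) * t) ∂μB)
    (hσ : ∀ z : ℝ, σ z = ∫ t, Real.exp (-lam * (1 - z) * t) ∂μS)
    (hf : ∀ z : ℝ, f z = (1 - Real.exp (-ν * G)) * β z + Real.exp (-ν * G) * z)
    (hK : ∀ z : ℝ, K z = σ z * Real.exp (-lam * (1 - β z) * G))
    (X : ℝ → ℝ)
    (hXcont : ContinuousWithinAt X (Icc (0:ℝ) 1) 1)
    (hX1 : X 1 = 1)
    (hXeq : ∀ z ∈ Icc (0:ℝ) 1, X z = K z * X (f z)) :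
    ∀ z ∈ Icc (0:ℝ) 1,
      (Multipliable fun j : ℕ => K (f^[j] z)) ∧
      X z = ∏' j : ℕ, K (f^[j] z) := by
  -- basic constants
  have hb₁0 : 0 ≤ b₁ := hb₁ ▸ integral_nonneg_of_ae hsuppB
  have hE1 : Real.exp (-ν * G) < 1 := by
    rw [Real.exp_lt_one_iff]; nlinarith
  have hE0 : 0 < Real.exp (-ν * G) := Real.exp_pos _
  set c : ℝ := (1 - Real.exp (-ν * G)) * (1 - lam * b₁) with hc
  have hc0 : 0 < c := by
    apply mul_pos <;> linarith
  have hc1 : c < 1 := by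
    have h1 : 1 - Real.exp (-ν * G) < 1 := by linarith
    have h2 : 1 - lam * b₁ ≤ 1 := by nlinarith
    nlinarith
  -- β bounds
  have hβle : ∀ w ∈ Icc (0:ℝ) 1, β w ≤ 1 := fun w hw => by
    rw [hβ]; exact aux_exp_le_one lam w hlam hw μB hsuppB
  have hβ0 : ∀ w : ℝ, 0 ≤ β w := fun w => by
    rw [hβ]; exact aux_exp_nonneg lam w μB
  have hβge : ∀ w ∈ Icc (0:ℝ) 1, 1 - lam * (1 - w) * b₁ ≤ β w := by
    intro w hw
    have hint2 : Integrable (fun t : ℝ => 1 - lam * (1 - w) * t) μB :=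
      (integrable_const (1:ℝ)).sub (hintB.const_mul _)
    have hmono := integral_mono_ae hint2 (aux_exp_integrable lam w hlam hw μB hsuppB) ?_
    · have hval : (∫ t, (1 - lam * (1 - w) * t) ∂μB) = 1 - lam * (1 - w) * b₁ := by
        rw [integral_sub (integrable_const _) (hintB.const_mul _), integral_const,
          integral_const_mul, hb₁]
        simp
      rw [hβ]; rw [hval] at hmono; exact hmono
    · filter_upwards with t
      have := Real.add_one_le_exp (-lam * (1 - w) * t)
      linarith
  -- σ bounds
  have hσle : ∀ w ∈ Icc (0:ℝ) 1, σ w ≤ 1 := fun w hw => by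
    rw [hσ]; exact aux_exp_le_one lam w hlam hw μS hsuppS
  have hσ0 : ∀ w : ℝ, 0 ≤ σ w := fun w => by
    rw [hσ]; exact aux_exp_nonneg lam w μS
  -- K bounds
  have hK0 : ∀ w : ℝ, 0 ≤ K w := fun w => by
    rw [hK]; exact mul_nonneg (hσ0 w) (Real.exp_pos _).le
  have hK1 : ∀ w ∈ Icc (0:ℝ) 1, K w ≤ 1 := by
    intro w hw
    rw [hK]
    have h1 : Real.exp (-lam * (1 - β w) * G) ≤ 1 := by
      rw [Real.exp_le_one_iff]
      have h0 : 0 ≤ lam * (1 - β w) * G :=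
        mul_nonneg (mul_nonneg hlam.le (by linarith [hβle w hw])) hG.le
      linarith
    have := hσle w hw
    nlinarith [hσ0 w, Real.exp_pos (-lam * (1 - β w) * G)]
  -- f bounds
  have hfmem : ∀ w ∈ Icc (0:ℝ) 1, f w ∈ Icc (0:ℝ) 1 := by
    intro w hw
    rw [hf]
    constructor
    · nlinarith [hβ0 w, hw.1]
    · nlinarith [hβle w hw, hw.2]
  have hfge : ∀ w ∈ Icc (0:ℝ) 1, c * (1 - w) ≤ f w - w := by
    intro w hw
    rw [hf]
    have := hβge w hw
    have h1w : 0 ≤ 1 - w := by linarith [hw.2]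
    nlinarith
  intro z hz
  set a : ℕ → ℝ := fun n => f^[n] z with ha
  -- iterate facts
  have key : ∀ n : ℕ, a n ∈ Icc (0:ℝ) 1 ∧ 1 - a n ≤ (1 - c) ^ n * (1 - z) ∧
      X z = (∏ j ∈ Finset.range n, K (a j)) * X (a n) := by
    intro n
    induction n with
    | zero =>
      have h0 : a 0 = z := rfl
      exact ⟨h0 ▸ hz, by rw [h0]; simp, by rw [h0]; simp⟩
    | succ n ih =>
      obtain ⟨hmem, hgeo, hprod⟩ := ih
      have han1 : a (n+1) = f (a n) := Function.iterate_succ_apply' f n z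
      refine ⟨han1 ▸ hfmem _ hmem, ?_, ?_⟩
      · rw [han1]
        have h1 := hfge _ hmem
        have h2 : 1 - f (a n) ≤ (1 - c) * (1 - a n) := by nlinarith
        calc 1 - f (a n) ≤ (1 - c) * (1 - a n) := h2
          _ ≤ (1 - c) * ((1 - c) ^ n * (1 - z)) := by
              apply mul_le_mul_of_nonneg_left hgeo (by linarith)
          _ = (1 - c) ^ (n+1) * (1 - z) := by ring
      · rw [Finset.prod_range_succ, han1, mul_assoc]
        rw [hprod, hXeq _ hmem]
  -- convergence of a to 1
  have hlim : Tendsto a atTop (𝓝 1) := by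
    have hgeo : Tendsto (fun n => (1 - c) ^ n * (1 - z)) atTop (𝓝 0) := by
      have := tendsto_pow_atTop_nhds_zero_of_lt_one (by linarith : (0:ℝ) ≤ 1 - c)
        (by linarith : 1 - c < 1)
      simpa using this.mul_const (1 - z)
    have hsq : Tendsto (fun n => 1 - a n) atTop (𝓝 0) := by
      apply squeeze_zero (fun n => by linarith [(key n).1.2]) (fun n => (key n).2.1) hgeo
    have : Tendsto (fun n => 1 - (1 - a n)) atTop (𝓝 (1 - 0)) :=
      tendsto_const_nhds.sub hsq
    simpa using this
  have hXa : Tendsto (fun n => X (a n)) atTop (𝓝 1) := by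
    have h1 : Tendsto a atTop (𝓝[Icc (0:ℝ) 1] 1) :=
      tendsto_nhdsWithin_of_tendsto_nhds_of_eventually_within _ hlim
        (Eventually.of_forall fun n => (key n).1)
    have := hXcont.tendsto.comp h1
    rwa [hX1] at this
  -- multipliability via antitone finset products
  set g : ℕ → ℝ := fun j => K (a j) with hg
  have hg0 : ∀ j, 0 ≤ g j := fun j => hK0 _
  have hg1 : ∀ j, g j ≤ 1 := fun j => hK1 _ (key j).1
  have hanti : Antitone (fun s : Finset ℕ => ∏ j ∈ s, g j) := by
    intro s t hst
    dsimp only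
    rw [← Finset.prod_sdiff (Finset.le_iff_subset.mp hst)]
    have h1 : (∏ j ∈ t \ s, g j) ≤ 1 := Finset.prod_le_one (fun j _ => hg0 j) (fun j _ => hg1 j)
    have h2 : (0:ℝ) ≤ ∏ j ∈ s, g j := Finset.prod_nonneg fun j _ => hg0 j
    nlinarith
  have hbdd : BddBelow (Set.range fun s : Finset ℕ => ∏ j ∈ s, g j) := by
    refine ⟨0, ?_⟩
    rintro x ⟨s, rfl⟩
    exact Finset.prod_nonneg fun j _ => hg0 j
  have hHP : HasProd g (⨅ s : Finset ℕ, ∏ j ∈ s, g j) :=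
    tendsto_atTop_ciInf hanti hbdd
  have hM : Multipliable g := ⟨_, hHP⟩
  have htp : Tendsto (fun n => ∏ j ∈ Finset.range n, g j) atTop (𝓝 (∏' j, g j)) :=
    hM.hasProd.tendsto_prod_nat
  have hfinal : X z = (∏' j, g j) * 1 := by
    refine tendsto_nhds_unique ?_ (htp.mul hXa)
    have heq : (fun n => (∏ j ∈ Finset.range n, g j) * X (a n)) = fun _ => X z := by
      funext n; exact ((key n).2.2).symm
    rw [heq]
    exact tendsto_const_nhds
  exact ⟨hM, by rw [hfinal, mul_one]⟩
end

section
/- Let λ > 0, ν > 0, b₁ > 0, b₂ ≥ 0, s₁ > 0, s₂ ≥ 0 with ρ := λ b₁ ∈ (0,1), and for G > 0 define R(G) = ρ + λ² b₂/(2(1−ρ)) + λ(G² + 2 G s₁ + s₂)/(2(G + s₁)) + λ ρ (G + s₁)/(1−ρ) + λ(ρ G + s₁) e^{−νG}/((1−ρ)(1−e^{−νG})). Then G · R(G) → λ s₁ / (ν (1−ρ)) as G → 0⁺; in other words, R(G) is asymptotically equivalent to λ s₁ / (G ν (1−ρ)) as G ↓ 0. -/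
open Filter

/-- As `G ↓ 0`, the closed-form mean queue length `R(G)` of the
single retrial queue with vacations and glue periods satisfies
`G · R(G) → λ s₁ / (ν (1-ρ))`, i.e. `R(G) ~ λ s₁ / (G ν (1-ρ))`. -/
theorem mean_number_small_glue_asymptotics
    (lam ν b₁ b₂ s₁ s₂ ρ : ℝ)
    (hlam : 0 < lam) (hν : 0 < ν)
    (hb₁ : 0 < b₁) (hb₂ : 0 ≤ b₂) (hs₁ : 0 < s₁) (hs₂ : 0 ≤ s₂)
    (hρdef : ρ = lam * b₁) (hρ0 : 0 < ρ) (hρ1 : ρ < 1)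
    (R : ℝ → ℝ)
    (hR : ∀ G : ℝ, 0 < G →
      R G = ρ + lam ^ 2 * b₂ / (2 * (1 - ρ))
            + lam * (G ^ 2 + 2 * G * s₁ + s₂) / (2 * (G + s₁))
            + lam * ρ * (G + s₁) / (1 - ρ)
            + lam * (ρ * G + s₁) * Real.exp (-ν * G)
              / ((1 - ρ) * (1 - Real.exp (-ν * G)))) :
    Tendsto (fun G : ℝ => G * R G) (nhdsWithin 0 (Set.Ioi 0))
      (nhds (lam * s₁ / (ν * (1 - ρ)))) := by
  set T := nhdsWithin (0:ℝ) (Set.Ioi 0) with hT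
  have hρne : (1:ℝ) - ρ ≠ 0 := by linarith
  -- slope limit : (1 - exp(-νG))/G → ν
  have hderiv : HasDerivAt (fun x : ℝ => 1 - Real.exp (-ν * x)) ν 0 := by
    have h1 : HasDerivAt (fun x : ℝ => -ν * x) (-ν * 1) 0 :=
      (hasDerivAt_id 0).const_mul (-ν)
    have h2 := h1.exp
    have h3 := h2.const_sub 1
    exact h3.congr_deriv (by simp)
  have hslope : Tendsto (fun G : ℝ => (1 - Real.exp (-ν * G)) / G) T (nhds ν) := by
    have := hasDerivAt_iff_tendsto_slope.mp hderiv
    have hmono : T ≤ nhdsWithin (0:ℝ) {(0:ℝ)}ᶜ :=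
      nhdsWithin_mono 0 (fun x hx => ne_of_gt hx)
    have h4 := this.mono_left hmono
    refine h4.congr (fun G => ?_)
    simp [slope_fun_def]
    ring
  have hinv : Tendsto (fun G : ℝ => G / (1 - Real.exp (-ν * G))) T (nhds ν⁻¹) := by
    have := hslope.inv₀ (ne_of_gt hν)
    refine this.congr (fun G => ?_)
    rw [inv_div]
  have hG0 : Tendsto (fun G : ℝ => G) T (nhds 0) :=
    (continuous_id.tendsto 0).mono_left nhdsWithin_le_nhds
  -- limit of the "bounded" part
  have h2s₁ : (2 * ((0:ℝ) + s₁)) ≠ 0 := by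
    simp only [zero_add]; positivity
  have hpart1 : Tendsto (fun G : ℝ =>
      ρ + lam ^ 2 * b₂ / (2 * (1 - ρ))
      + lam * (G ^ 2 + 2 * G * s₁ + s₂) / (2 * (G + s₁))
      + lam * ρ * (G + s₁) / (1 - ρ)) T
      (nhds (ρ + lam ^ 2 * b₂ / (2 * (1 - ρ))
      + lam * (0 ^ 2 + 2 * 0 * s₁ + s₂) / (2 * (0 + s₁))
      + lam * ρ * (0 + s₁) / (1 - ρ))) := by
    have hc : ContinuousAt (fun G : ℝ =>
        ρ + lam ^ 2 * b₂ / (2 * (1 - ρ))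
        + lam * (G ^ 2 + 2 * G * s₁ + s₂) / (2 * (G + s₁))
        + lam * ρ * (G + s₁) / (1 - ρ)) 0 := by
      apply ContinuousAt.add
      apply ContinuousAt.add
      · exact continuousAt_const
      · exact ContinuousAt.div (by fun_prop) (by fun_prop) h2s₁
      · exact ContinuousAt.div (by fun_prop) continuousAt_const (by positivity)
    exact hc.tendsto.mono_left nhdsWithin_le_nhds
  have hpart2 : Tendsto (fun G : ℝ =>
      lam * (ρ * G + s₁) * Real.exp (-ν * G) / (1 - ρ)) T
      (nhds (lam * (ρ * 0 + s₁) * Real.exp (-ν * 0) / (1 - ρ))) := by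
    have hc : ContinuousAt (fun G : ℝ =>
        lam * (ρ * G + s₁) * Real.exp (-ν * G) / (1 - ρ)) 0 := by
      exact ContinuousAt.div (by fun_prop) continuousAt_const hρne
    exact hc.tendsto.mono_left nhdsWithin_le_nhds
  have hmain : Tendsto (fun G : ℝ =>
      G * (ρ + lam ^ 2 * b₂ / (2 * (1 - ρ))
        + lam * (G ^ 2 + 2 * G * s₁ + s₂) / (2 * (G + s₁))
        + lam * ρ * (G + s₁) / (1 - ρ))
      + (lam * (ρ * G + s₁) * Real.exp (-ν * G) / (1 - ρ))
        * (G / (1 - Real.exp (-ν * G)))) T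
      (nhds (lam * s₁ / (ν * (1 - ρ)))) := by
    have := (hG0.mul hpart1).add (hpart2.mul hinv)
    convert this using 2
    norm_num
    field_simp
  refine hmain.congr' ?_
  filter_upwards [self_mem_nhdsWithin] with G hG
  rw [hR G hG]
  have hGne : G ≠ 0 := ne_of_gt hG
  have hE : Real.exp (-ν * G) < 1 := by
    rw [Real.exp_lt_one_iff]
    have : 0 < ν * G := mul_pos hν hG
    linarith
  have hEne : 1 - Real.exp (-ν * G) ≠ 0 := by linarith
  have hden : (2 : ℝ) * (G + s₁) ≠ 0 := ne_of_gt (by have hg : (0:ℝ) < G := hG; linarith)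
  field_simp
end

section
/- Let λ > 0, ν > 0, b₁ > 0, b₂ ≥ 0, s₁ ≥ 0, s₂ ≥ s₁² with ρ := λ b₁ ∈ (0,1), and suppose s₁ > 0 or restrict to G > 0. Then the function R : (0,∞) → ℝ given by R(G) = ρ + λ² b₂/(2(1−ρ)) + λ(G² + 2 G s₁ + s₂)/(2(G + s₁)) + λ ρ (G + s₁)/(1−ρ) + λ(ρ G + s₁) e^{−νG}/((1−ρ)(1−e^{−νG})) is convex on (0,∞). -/
open Real Set

-- key inequality: (x-2)e^x + x + 2 ≥ 0 for x ≥ 0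
lemma key_ineq {x : ℝ} (hx : 0 ≤ x) : 0 ≤ (x - 2) * Real.exp x + x + 2 := by
  set h : ℝ → ℝ := fun y => (y - 2) * Real.exp y + y + 2 with hh
  have hd : ∀ y : ℝ, HasDerivAt h (1 * Real.exp y + (y - 2) * Real.exp y + 1) y := by
    intro y
    have h1 : HasDerivAt (fun y : ℝ => (y - 2) * Real.exp y)
        (1 * Real.exp y + (y - 2) * Real.exp y) y :=
      ((hasDerivAt_id y).sub_const 2).mul (Real.hasDerivAt_exp y)
    have h2 : HasDerivAt (fun y : ℝ => (y - 2) * Real.exp y + y + 2)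
        (1 * Real.exp y + (y - 2) * Real.exp y + 1) y :=
      (h1.add (hasDerivAt_id y)).add_const 2
    exact h2
  have hmono : Monotone h := by
    apply monotone_of_deriv_nonneg
    · exact fun y => (hd y).differentiableAt
    · intro y
      rw [(hd y).deriv]
      have h3 : -y + 1 ≤ Real.exp (-y) := Real.add_one_le_exp (-y)
      have h4 : Real.exp (-y) * Real.exp y = 1 := by
        rw [← Real.exp_add]; simp
      nlinarith [Real.exp_pos y, Real.exp_pos (-y)]
  have h0 : h 0 = 0 := by simp [hh]
  have := hmono hx
  rw [h0] at this
  simpa [hh] using this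

-- convexity of G ↦ (a G + c)/(e^{νG} - 1) on (0, ∞)
lemma exp_term_convex (ν a c : ℝ) (hν : 0 < ν) (ha : 0 ≤ a) (hc : 0 ≤ c) :
    ConvexOn ℝ (Set.Ioi (0:ℝ))
      (fun G : ℝ => (a * G + c) / (Real.exp (ν * G) - 1)) := by
  have hint : interior (Set.Ioi (0:ℝ)) = Set.Ioi 0 := interior_Ioi
  have hE : ∀ G : ℝ, G ∈ Set.Ioi (0:ℝ) → 1 < Real.exp (ν * G) := by
    intro G hG
    have : 0 < ν * G := mul_pos hν hG
    exact Real.one_lt_exp_iff.mpr this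
  have hvne : ∀ G : ℝ, G ∈ Set.Ioi (0:ℝ) → Real.exp (ν * G) - 1 ≠ 0 := by
    intro G hG; have := hE G hG; linarith
  -- derivatives
  have hdv : ∀ G : ℝ, HasDerivAt (fun G : ℝ => Real.exp (ν * G) - 1)
      (Real.exp (ν * G) * ν) G := by
    intro G
    have : HasDerivAt (fun G : ℝ => ν * G) (ν * 1) G := (hasDerivAt_id G).const_mul ν
    simpa using (this.exp.sub_const 1)
  have hdu : ∀ G : ℝ, HasDerivAt (fun G : ℝ => a * G + c) a G := by
    intro G
    simpa using (((hasDerivAt_id G).const_mul a).add_const c)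
  set f' : ℝ → ℝ := fun G =>
    (a * (Real.exp (ν * G) - 1) - (a * G + c) * (Real.exp (ν * G) * ν))
      / (Real.exp (ν * G) - 1) ^ 2 with hf'def
  set f'' : ℝ → ℝ := fun G =>
    ν * Real.exp (ν * G) *
      (a * ((ν * G - 2) * Real.exp (ν * G) + ν * G + 2)
        + c * ν * (Real.exp (ν * G) + 1)) / (Real.exp (ν * G) - 1) ^ 3 with hf''def
  apply convexOn_of_hasDerivWithinAt2_nonneg (f' := f') (f'' := f'') (convex_Ioi 0)
  · -- continuity
    apply ContinuousOn.div
    · fun_prop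
    · fun_prop
    · exact hvne
  · -- first derivative
    rw [hint]
    intro G hG
    exact (((hdu G).div (hdv G) (hvne G hG))).hasDerivWithinAt
  · -- second derivative
    rw [hint]
    intro G hG
    have hne := hvne G hG
    -- derivative of numerator N = a*(e-1) - (a G + c)*(e ν)
    have hN : HasDerivAt (fun G : ℝ =>
        a * (Real.exp (ν * G) - 1) - (a * G + c) * (Real.exp (ν * G) * ν))
        (a * (Real.exp (ν * G) * ν)
          - (a * (Real.exp (ν * G) * ν) + (a * G + c) * (Real.exp (ν * G) * ν * ν))) G := by
      have h1 : HasDerivAt (fun G : ℝ => a * (Real.exp (ν * G) - 1))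
          (a * (Real.exp (ν * G) * ν)) G := (hdv G).const_mul a
      have h2 : HasDerivAt (fun G : ℝ => Real.exp (ν * G) * ν)
          (Real.exp (ν * G) * ν * ν) G := by
        have : HasDerivAt (fun G : ℝ => ν * G) (ν * 1) G := (hasDerivAt_id G).const_mul ν
        simpa [mul_comm, mul_assoc, mul_left_comm] using (this.exp.mul_const ν)
      have h3 := (hdu G).mul h2
      exact h1.sub h3
    have hD : HasDerivAt (fun G : ℝ => (Real.exp (ν * G) - 1) ^ 2)
        (2 * (Real.exp (ν * G) - 1) * (Real.exp (ν * G) * ν)) G := by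
      have := (hdv G).fun_pow 2
      refine this.congr_deriv ?_
      push_cast
      ring
    have hne2 : (Real.exp (ν * G) - 1) ^ 2 ≠ 0 := pow_ne_zero _ hne
    have hder := (hN.div hD hne2)
    have heq : (a * (Real.exp (ν * G) * ν)
          - (a * (Real.exp (ν * G) * ν) + (a * G + c) * (Real.exp (ν * G) * ν * ν)))
          * (Real.exp (ν * G) - 1) ^ 2
        - (a * (Real.exp (ν * G) - 1) - (a * G + c) * (Real.exp (ν * G) * ν))
          * (2 * (Real.exp (ν * G) - 1) * (Real.exp (ν * G) * ν))
        = ((Real.exp (ν * G) - 1)) * (ν * Real.exp (ν * G) *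
            (a * ((ν * G - 2) * Real.exp (ν * G) + ν * G + 2)
              + c * ν * (Real.exp (ν * G) + 1))) := by ring
    have : f'' G = ((a * (Real.exp (ν * G) * ν)
          - (a * (Real.exp (ν * G) * ν) + (a * G + c) * (Real.exp (ν * G) * ν * ν)))
          * (Real.exp (ν * G) - 1) ^ 2
        - (a * (Real.exp (ν * G) - 1) - (a * G + c) * (Real.exp (ν * G) * ν))
          * (2 * (Real.exp (ν * G) - 1) * (Real.exp (ν * G) * ν)))
          / ((Real.exp (ν * G) - 1) ^ 2) ^ 2 := by
      rw [heq, hf''def]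
      field_simp
    rw [hf'def]
    have hfinal := hder.hasDerivWithinAt (s := Set.Ioi (0:ℝ))
    rw [← this] at hfinal
    exact hfinal
  · -- nonnegativity
    rw [hint]
    intro G hG
    have hE1 := hE G hG
    have hx : (0:ℝ) ≤ ν * G := le_of_lt (mul_pos hν hG)
    have hkey := key_ineq hx
    apply div_nonneg
    · apply mul_nonneg
      · positivity
      · have h1 : 0 ≤ a * ((ν * G - 2) * Real.exp (ν * G) + ν * G + 2) := by
          apply mul_nonneg ha; linarith
        have h2 : 0 ≤ c * ν * (Real.exp (ν * G) + 1) := by positivity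
        linarith
    · have : (0:ℝ) < Real.exp (ν * G) - 1 := by linarith
      positivity

lemma inv_term_convex (k t : ℝ) (hk : 0 ≤ k) (ht : 0 ≤ t) :
    ConvexOn ℝ (Set.Ioi (0:ℝ)) (fun G : ℝ => k / (G + t)) := by
  have hint : interior (Set.Ioi (0:ℝ)) = Set.Ioi 0 := interior_Ioi
  have hne : ∀ G : ℝ, G ∈ Set.Ioi (0:ℝ) → G + t ≠ 0 := by
    intro G hG
    have : (0:ℝ) < G + t := by have := hG.out; linarith
    linarith
  apply convexOn_of_hasDerivWithinAt2_nonneg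
      (f' := fun G => -k / (G + t) ^ 2) (f'' := fun G => 2 * k / (G + t) ^ 3) (convex_Ioi 0)
  · exact ContinuousOn.div continuousOn_const (by fun_prop) hne
  · rw [hint]
    intro G hG
    have h1 : HasDerivAt (fun G : ℝ => G + t) 1 G := (hasDerivAt_id G).add_const t
    have := (hasDerivAt_const G k).div h1 (hne G hG)
    have h2 : (0 * (G + t) - k * 1) / (G + t) ^ 2 = -k / (G + t) ^ 2 := by ring
    rw [h2] at this
    exact this.hasDerivWithinAt
  · rw [hint]
    intro G hG
    have hGt : (0:ℝ) < G + t := by have := hG.out; linarith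
    have h1 : HasDerivAt (fun G : ℝ => (G + t) ^ 2) (2 * (G + t)) G := by
      have := (((hasDerivAt_id G).add_const t).fun_pow 2)
      refine this.congr_deriv ?_
      push_cast [id_eq]; ring
    have := (hasDerivAt_const G (-k)).div h1 (pow_ne_zero 2 (hne G hG))
    have h2 : (0 * (G + t) ^ 2 - -k * (2 * (G + t))) / ((G + t) ^ 2) ^ 2
        = 2 * k / (G + t) ^ 3 := by
      field_simp
      ring
    rw [h2] at this
    exact this.hasDerivWithinAt
  · rw [hint]
    intro G hG
    have hGt : (0:ℝ) < G + t := by have := hG.out; linarith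
    positivity

lemma convexOn_congr' {s : Set ℝ} {f g : ℝ → ℝ} (hg : ConvexOn ℝ s g)
    (h : ∀ x ∈ s, f x = g x) : ConvexOn ℝ s f := by
  refine ⟨hg.1, fun x hx y hy a b ha hb hab => ?_⟩
  rw [h x hx, h y hy, h _ (hg.1 hx hy ha hb hab)]
  exact hg.2 hx hy ha hb hab

/-- The closed-form stationary mean number of customers `R(G)`
in the single retrial queue with vacations and glue periods is a convex
function of the glue period length `G` on `(0,∞)`. -/
theorem mean_number_convex_in_glue
    (lam ν b₁ b₂ s₁ s₂ ρ : ℝ)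
    (hlam : 0 < lam) (hν : 0 < ν)
    (hb₁ : 0 < b₁) (hb₂ : 0 ≤ b₂) (hs₁ : 0 ≤ s₁) (hs₂ : s₁ ^ 2 ≤ s₂)
    (hρdef : ρ = lam * b₁) (hρ0 : 0 < ρ) (hρ1 : ρ < 1) :
    ConvexOn ℝ (Set.Ioi (0:ℝ))
      (fun G : ℝ =>
        ρ + lam ^ 2 * b₂ / (2 * (1 - ρ))
          + lam * (G ^ 2 + 2 * G * s₁ + s₂) / (2 * (G + s₁))
          + lam * ρ * (G + s₁) / (1 - ρ)
          + lam * (ρ * G + s₁) * Real.exp (-ν * G)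
            / ((1 - ρ) * (1 - Real.exp (-ν * G)))) := by
  have h1ρ : (0:ℝ) < 1 - ρ := by linarith
  set c₀ : ℝ := ρ + lam ^ 2 * b₂ / (2 * (1 - ρ)) + lam * s₁ / 2 + lam * ρ * s₁ / (1 - ρ)
    with hc₀
  set m : ℝ := lam / 2 + lam * ρ / (1 - ρ) with hm
  set K : ℝ := lam * (s₂ - s₁ ^ 2) / 2 with hK
  set A : ℝ := lam * ρ / (1 - ρ) with hA
  set C : ℝ := lam * s₁ / (1 - ρ) with hC
  have hconv : ConvexOn ℝ (Set.Ioi (0:ℝ))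
      (fun G : ℝ => (c₀ + m * G + K / (G + s₁)) + (A * G + C) / (Real.exp (ν * G) - 1)) := by
    have e1 : ConvexOn ℝ (Set.Ioi (0:ℝ)) (fun G : ℝ => c₀ + m * G) := by
      have : ConvexOn ℝ (Set.Ioi (0:ℝ)) (fun G : ℝ => m • id G) :=
        (convexOn_id (convex_Ioi 0)).smul (by positivity)
      have := (convexOn_const c₀ (convex_Ioi (0:ℝ))).add this
      exact this
    have e2 := inv_term_convex K s₁ (by
      have : 0 ≤ s₂ - s₁ ^ 2 := by linarith
      positivity) hs₁
    have e3 := exp_term_convex ν A C hν (by positivity) (by positivity)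
    exact (e1.add e2).add e3
  apply convexOn_congr' hconv
  intro G hG
  have hG0 : (0:ℝ) < G := hG.out
  have hGs : (0:ℝ) < G + s₁ := by linarith
  have hE : 1 < Real.exp (ν * G) := Real.one_lt_exp_iff.mpr (mul_pos hν hG0)
  have hEne : Real.exp (ν * G) - 1 ≠ 0 := by linarith
  have hexpneg : Real.exp (-ν * G) = (Real.exp (ν * G))⁻¹ := by
    rw [show -ν * G = -(ν * G) by ring, Real.exp_neg]
  have hEpos : 0 < Real.exp (ν * G) := Real.exp_pos _
  have h1mE : 1 - Real.exp (-ν * G) ≠ 0 := by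
    rw [hexpneg]
    have : (Real.exp (ν * G))⁻¹ < 1 := inv_lt_one_of_one_lt₀ hE
    linarith
  rw [hexpneg, hc₀, hm, hK, hA, hC]
  have hEne' : Real.exp (ν * G) ≠ 0 := ne_of_gt hEpos
  field_simp
  ring
end

section
/- Let N ≥ 1 and for i = 1,…,N let λ_i > 0, s_i ≥ 0, G_i > 0, b_i > 0, u_i ∈ (0,1), and set ρ_i = λ_i b_i with ρ := ∑_k ρ_k < 1. Suppose real numbers x_j^{(i)} (for i, j = 1,…,N, indices of i cyclic modulo N) satisfy for every i: x_i^{(i+1)} = λ_i s_i + λ_i ρ_i G_i + (ρ_i(1 − u_i) + u_i) x_i^{(i)}, and for every j ≠ i: x_j^{(i+1)} = λ_j s_i + λ_j (1 + ρ_i) G_i + λ_j b_i (1 − u_i) x_i^{(i)} + x_j^{(i)}. Then for every i, x_i^{(i)} = (λ_i/(1 − u_i)) · ( (∑_{j=1}^N (s_j + G_j))/(1 − ρ) − G_i ). -/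
open Finset

/-- The solution of the cyclic first-moment balance equations of
the N-queue polling model with retrials and glue periods: the mean number of
type-`i` customers in orbit at the start of a glue period of station `i`
equals `(λ_i/(1-u_i)) ((∑_j (s_j + G_j))/(1-ρ) - G_i)`.
Here `x i j` denotes `x_j^{(i)}`, the mean number of type-`j` customers in
orbit at the start of a glue period of station `i`. -/
theorem polling_orbit_first_moments
    (N : ℕ) [NeZero N] (hN : 1 ≤ N)
    (lam s G b u : Fin N → ℝ)
    (hlam : ∀ i, 0 < lam i) (hs : ∀ i, 0 ≤ s i) (hG : ∀ i, 0 < G i)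
    (hb : ∀ i, 0 < b i) (hu : ∀ i, 0 < u i ∧ u i < 1)
    (hρ : ∑ k, lam k * b k < 1)
    (x : Fin N → Fin N → ℝ)
    (hdiag : ∀ i : Fin N,
      x (i + 1) i = lam i * s i + lam i * (lam i * b i) * G i
        + ((lam i * b i) * (1 - u i) + u i) * x i i)
    (hoff : ∀ i j : Fin N, j ≠ i →
      x (i + 1) j = lam j * s i + lam j * (1 + lam i * b i) * G i
        + lam j * b i * (1 - u i) * x i i + x i j) :
    ∀ i : Fin N,
      x i i = (lam i / (1 - u i))
        * ((∑ j, (s j + G j)) / (1 - ∑ k, lam k * b k) - G i) := by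
  have hρ1 : (1:ℝ) - ∑ k, lam k * b k ≠ 0 := by linarith
  set C : ℝ := ∑ m, (s m + (1 + lam m * b m) * G m + b m * (1 - u m) * x m m)
    with hCdef
  -- telescoping around the cycle
  have tel : ∀ j : Fin N, (∑ m : Fin N, (x (m+1) j - x m j)) = 0 := by
    intro j
    rw [Finset.sum_sub_distrib]
    have h : (∑ m : Fin N, x (m+1) j) = ∑ m : Fin N, x m j :=
      Fintype.sum_equiv (Equiv.addRight (1 : Fin N)) _ _ (fun m => rfl)
    rw [h, sub_self]
  -- the key balance identity
  have key : ∀ j : Fin N, (1 - u j) * x j j = lam j * (C - G j) := by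
    intro j
    have hsum : ∑ m : Fin N, (x (m+1) j - x m j)
        = ∑ m : Fin N, ((lam j * s m + lam j * (1 + lam m * b m) * G m
            + lam j * (b m * (1 - u m) * x m m))
          - (if m = j then lam j * G j + (1 - u j) * x j j else 0)) := by
      apply Finset.sum_congr rfl
      intro m _
      by_cases h : m = j
      · subst h
        rw [if_pos rfl, hdiag m]
        ring
      · simp only [if_neg h]
        rw [hoff m j (Ne.symm h)]
        ring
    rw [tel j, Finset.sum_sub_distrib, Finset.sum_ite_eq' Finset.univ j] at hsum
    simp only [Finset.mem_univ, if_pos] at hsum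
    have hC2 : ∑ m : Fin N, (lam j * s m + lam j * (1 + lam m * b m) * G m
        + lam j * (b m * (1 - u m) * x m m)) = lam j * C := by
      rw [hCdef, Finset.mul_sum]
      apply Finset.sum_congr rfl
      intro m _
      ring
    rw [hC2] at hsum
    linarith [hsum]
  -- solve for C
  have hz : ∀ m : Fin N, b m * (1 - u m) * x m m = b m * (lam m * (C - G m)) := by
    intro m
    calc b m * (1 - u m) * x m m = b m * ((1 - u m) * x m m) := by ring
      _ = b m * (lam m * (C - G m)) := by rw [key m]
  have hCeq : C = (∑ j, (s j + G j)) + (∑ k, lam k * b k) * C := by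
    calc C = ∑ m, (s m + G m + lam m * b m * C) := by
          rw [hCdef]
          apply Finset.sum_congr rfl
          intro m _
          linear_combination hz m
      _ = (∑ j, (s j + G j)) + (∑ k, lam k * b k) * C := by
          rw [Finset.sum_mul, ← Finset.sum_add_distrib]
  have hCval : C = (∑ j, (s j + G j)) / (1 - ∑ k, lam k * b k) := by
    rw [eq_div_iff hρ1]
    linarith [hCeq]
  -- conclude
  intro i
  have h1 := key i
  have hu1 : (1:ℝ) - u i ≠ 0 := by have := (hu i).2; linarith
  rw [hCval] at h1
  rw [div_mul_eq_mul_div, eq_div_iff hu1]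
  linarith [h1]
end

section
/- (Theorem 3, abstract form) Let N ≥ 1. Let h : [0,1]^N → [0,1]^N satisfy h(1,…,1) = (1,…,1) and, for some N×N matrix M with nonnegative entries, 1 − h_i(z) ≤ ∑_{j=1}^N M_{ij}(1 − z_j) for all z ∈ [0,1]^N and all i. Suppose there exists a vector b with b_j > 0 for all j such that (M b)_i < b_i for all i. Let K : [0,1]^N → ℝ satisfy 0 < K(z) ≤ 1 and 1 − K(z) ≤ C ∑_{j=1}^N (1 − z_j) for all z ∈ [0,1]^N, for some constant C ≥ 0. Let X : [0,1]^N → ℝ be continuous at (1,…,1) with X(1,…,1) = 1 and satisfy X(z) = K(z) X(h(z)) for all z ∈ [0,1]^N. Then for every z ∈ [0,1]^N the iterates h^{(m)}(z) (with h^{(0)}(z) = z and h^{(m)}(z) = h(h^{(m−1)}(z))) converge to (1,…,1), the infinite product ∏_{m=0}^∞ K(h^{(m)}(z)) converges, and X(z) = ∏_{m=0}^∞ K(h^{(m)}(z)). -/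
open Filter Set

/-- Theorem 3, abstract form: For a multi-type branching
functional equation `X z = K z · X (h z)` on `[0,1]^N`, with offspring map `h`
dominated towards `1` by a nonnegative matrix `M` admitting a positive vector
`b` with `M b < b` componentwise, and an immigration generating function `K`
Lipschitz at `1`, the iterates `h^{(m)} z` converge to `1`, the infinite
product `∏_m K (h^{(m)} z)` converges, and `X z = ∏_m K (h^{(m)} z)`. -/
theorem multitype_branching_infinite_product
    (N : ℕ) (hN : 1 ≤ N)
    (h : (Fin N → ℝ) → (Fin N → ℝ))
    (hmap : Set.MapsTo h (Icc (0 : Fin N → ℝ) 1) (Icc (0 : Fin N → ℝ) 1))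
    (hone : h 1 = 1)
    (M : Matrix (Fin N) (Fin N) ℝ)
    (hMnonneg : ∀ i j, 0 ≤ M i j)
    (hdom : ∀ z ∈ Icc (0 : Fin N → ℝ) 1, ∀ i,
      1 - h z i ≤ ∑ j, M i j * (1 - z j))
    (b : Fin N → ℝ) (hb : ∀ j, 0 < b j)
    (hMb : ∀ i, M.mulVec b i < b i)
    (K : (Fin N → ℝ) → ℝ) (C : ℝ) (hC : 0 ≤ C)
    (hKpos : ∀ z ∈ Icc (0 : Fin N → ℝ) 1, 0 < K z ∧ K z ≤ 1)
    (hKlip : ∀ z ∈ Icc (0 : Fin N → ℝ) 1, 1 - K z ≤ C * ∑ j, (1 - z j))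
    (X : (Fin N → ℝ) → ℝ)
    (hXcont : ContinuousWithinAt X (Icc (0 : Fin N → ℝ) 1) 1)
    (hX1 : X 1 = 1)
    (hXeq : ∀ z ∈ Icc (0 : Fin N → ℝ) 1, X z = K z * X (h z)) :
    ∀ z ∈ Icc (0 : Fin N → ℝ) 1,
      Tendsto (fun m : ℕ => h^[m] z) atTop (nhds 1) ∧
      (Multipliable fun m : ℕ => K (h^[m] z)) ∧
      X z = ∏' m : ℕ, K (h^[m] z) := by
  intro z hz
  have i0 : Fin N := ⟨0, hN⟩
  -- iterates stay in the cube
  have hiter : ∀ m : ℕ, h^[m] z ∈ Icc (0 : Fin N → ℝ) 1 := by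
    intro m
    induction m with
    | zero => simpa using hz
    | succ m ih => rw [Function.iterate_succ_apply']; exact hmap ih
  -- the contraction factor ρ
  set ρ : ℝ := Finset.univ.sup' ⟨i0, Finset.mem_univ i0⟩
      (fun i => M.mulVec b i / b i) with hρdef
  have hρ1 : ρ < 1 := by
    rw [hρdef]; refine (Finset.sup'_lt_iff (H := _)).2 ?_
    intro i _
    exact (div_lt_one (hb i)).2 (hMb i)
  have hMle : ∀ i, M.mulVec b i ≤ ρ * b i := by
    intro i
    have h1 : M.mulVec b i / b i ≤ ρ :=
      Finset.le_sup' (fun i => M.mulVec b i / b i) (Finset.mem_univ i)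
    calc M.mulVec b i = (M.mulVec b i / b i) * b i :=
          (div_mul_cancel₀ _ (hb i).ne').symm
      _ ≤ ρ * b i := mul_le_mul_of_nonneg_right h1 (hb i).le
  have hmulVec_nonneg : ∀ i, 0 ≤ M.mulVec b i := by
    intro i
    show (0:ℝ) ≤ ∑ j, M i j * b j
    exact Finset.sum_nonneg fun j _ => mul_nonneg (hMnonneg i j) (hb j).le
  have hρ0 : 0 ≤ ρ := by
    have := Finset.le_sup' (f := fun i => M.mulVec b i / b i)
      (Finset.mem_univ i0)
    exact le_trans (div_nonneg (hmulVec_nonneg i0) (hb i0).le) this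
  -- the initial bound c
  set c : ℝ := Finset.univ.sup' ⟨i0, Finset.mem_univ i0⟩
      (fun j => (1 - z j) / b j) with hcdef
  have hc0 : 0 ≤ c := by
    have := Finset.le_sup' (f := fun j => (1 - z j) / b j)
      (Finset.mem_univ i0)
    have h2 : z i0 ≤ 1 := hz.2 i0
    exact le_trans (div_nonneg (by linarith) (hb i0).le) this
  have hcz : ∀ j, 1 - z j ≤ c * b j := by
    intro j
    have h1 : (1 - z j) / b j ≤ c :=
      Finset.le_sup' (fun j => (1 - z j) / b j) (Finset.mem_univ j)
    calc 1 - z j = ((1 - z j) / b j) * b j :=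
          (div_mul_cancel₀ _ (hb j).ne').symm
      _ ≤ c * b j := mul_le_mul_of_nonneg_right h1 (hb j).le
  -- the geometric bound on 1 - h^[m] z
  have key : ∀ m : ℕ, ∀ i, 1 - h^[m] z i ≤ c * ρ ^ m * b i := by
    intro m
    induction m with
    | zero => intro i; simpa using hcz i
    | succ m ih =>
      intro i
      have hmem := hiter m
      rw [Function.iterate_succ_apply']
      calc 1 - h (h^[m] z) i ≤ ∑ j, M i j * (1 - h^[m] z j) :=
            hdom _ hmem i
        _ ≤ ∑ j, M i j * (c * ρ ^ m * b j) := by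
            refine Finset.sum_le_sum fun j _ => ?_
            exact mul_le_mul_of_nonneg_left (ih j) (hMnonneg i j)
        _ = c * ρ ^ m * M.mulVec b i := by
            have hmv : M.mulVec b i = ∑ j, M i j * b j := rfl
            rw [hmv, Finset.mul_sum]
            exact Finset.sum_congr rfl fun j _ => by ring
        _ ≤ c * ρ ^ m * (ρ * b i) := by
            refine mul_le_mul_of_nonneg_left (hMle i) ?_
            exact mul_nonneg hc0 (pow_nonneg hρ0 m)
        _ = c * ρ ^ (m + 1) * b i := by ring
  -- convergence of the iterates to 1
  have hgeo : Tendsto (fun m : ℕ => ρ ^ m) atTop (nhds 0) :=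
    tendsto_pow_atTop_nhds_zero_of_lt_one hρ0 hρ1
  have htend : Tendsto (fun m : ℕ => h^[m] z) atTop (nhds 1) := by
    rw [tendsto_pi_nhds]
    intro i
    have hlow : Tendsto (fun m : ℕ => 1 - c * ρ ^ m * b i) atTop
        (nhds (1 : ℝ)) := by
      have : Tendsto (fun m : ℕ => c * ρ ^ m * b i) atTop (nhds 0) := by
        have := (hgeo.const_mul c).mul_const (b i)
        simpa using this
      simpa using (tendsto_const_nhds (x := (1:ℝ))).sub this
    refine tendsto_of_tendsto_of_tendsto_of_le_of_le hlow tendsto_const_nhds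
      (fun m => ?_) (fun m => (hiter m).2 i)
    have := key m i
    linarith
  refine ⟨htend, ?_⟩
  -- the factors
  set f : ℕ → ℝ := fun m => K (h^[m] z) with hfdef
  have hf : ∀ m, 0 < f m ∧ f m ≤ 1 := fun m => hKpos _ (hiter m)
  -- multipliability via antitone partial products
  have hanti : Antitone fun s : Finset ℕ => ∏ m ∈ s, f m := by
    intro s t hst
    dsimp only
    rw [← Finset.prod_sdiff hst]
    have h1 : ∏ m ∈ t \ s, f m ≤ 1 :=
      Finset.prod_le_one (fun m _ => (hf m).1.le) (fun m _ => (hf m).2)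
    have h2 : 0 ≤ ∏ m ∈ s, f m :=
      Finset.prod_nonneg fun m _ => (hf m).1.le
    calc (∏ m ∈ t \ s, f m) * ∏ m ∈ s, f m ≤ 1 * ∏ m ∈ s, f m :=
          mul_le_mul_of_nonneg_right h1 h2
      _ = ∏ m ∈ s, f m := one_mul _
  have hbdd : BddBelow (Set.range fun s : Finset ℕ => ∏ m ∈ s, f m) := by
    refine ⟨0, ?_⟩
    rintro x ⟨s, rfl⟩
    exact Finset.prod_nonneg fun m _ => (hf m).1.le
  have hP : HasProd f (⨅ s : Finset ℕ, ∏ m ∈ s, f m) :=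
    tendsto_atTop_ciInf hanti hbdd
  have hMul : Multipliable f := ⟨_, hP⟩
  refine ⟨hMul, ?_⟩
  -- partial products identity
  have hpart : ∀ n : ℕ, X z = (∏ m ∈ Finset.range n, f m) * X (h^[n] z) := by
    intro n
    induction n with
    | zero => simp
    | succ n ih =>
      rw [Finset.prod_range_succ, ih, hXeq _ (hiter n),
        Function.iterate_succ_apply']
      ring
  -- limit of X along the iterates
  have hXt : Tendsto (fun n : ℕ => X (h^[n] z)) atTop (nhds 1) := by
    have h1 : Tendsto (fun n : ℕ => h^[n] z) atTop
        (nhdsWithin 1 (Icc (0 : Fin N → ℝ) 1)) := by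
      rw [tendsto_nhdsWithin_iff]
      exact ⟨htend, Eventually.of_forall hiter⟩
    have := hXcont.tendsto.comp h1
    rwa [hX1] at this
  have hPt : Tendsto (fun n : ℕ => ∏ m ∈ Finset.range n, f m) atTop
      (nhds (∏' m, f m)) := hMul.hasProd.tendsto_prod_nat
  have hfinal : Tendsto (fun n : ℕ => (∏ m ∈ Finset.range n, f m) *
      X (h^[n] z)) atTop (nhds ((∏' m, f m) * 1)) := hPt.mul hXt
  rw [mul_one] at hfinal
  have : Tendsto (fun _ : ℕ => X z) atTop (nhds (∏' m, f m)) := by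
    refine hfinal.congr fun n => (hpart n).symm
  exact tendsto_nhds_unique this tendsto_const_nhds ▸ rfl
end
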